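/- Let g_k, g_{k+1} ∈ S² be unit vectors with g_k · g_{k+1} > −1 (not antipodal) and with the z-component of g_k ≠ −1. Define the error ε_g = arccos(g_k · g_{k+1}) · B_{g_k}ᵀ (g_k × g_{k+1}) / ‖g_k × g_{k+1}‖ when g_k ≠ g_{k+1} (rotation-vector form). Then exp((B_{g_k} ε_g)^∧) g_k = g_{k+1}. -/

import Mathlib

open Matrix
open scoped Nat

noncomputable section

/-- The 3×2 tangent-basis matrix `B_g` for `g = (x, y, z)ᵀ ∈ S²` with `z ≠ −1`. -/
def Bmat (x y z : ℝ) : Matrix (Fin 3) (Fin 2) ℝ :=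
  !![1 - x ^ 2 / (1 + z), -(x * y) / (1 + z);
     -(x * y) / (1 + z), 1 - y ^ 2 / (1 + z);
     -x, -y]

/-- The skew-symmetric hat map `(w)^∧`, with `(w)^∧ u = w × u`. -/
def hat (w : Fin 3 → ℝ) : Matrix (Fin 3) (Fin 3) ℝ :=
  !![0, -w 2, w 1; w 2, 0, -w 0; -w 1, w 0, 0]

lemma pow_odd_of_cube (A : Matrix (Fin 3) (Fin 3) ℝ) (h3 : A * A * A = -A) (k : ℕ) :
    A ^ (2 * k + 1) = ((-1 : ℝ) ^ k) • A := by
  induction k with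
  | zero => simp
  | succ n ih =>
    have h : 2 * (n + 1) + 1 = (2 * n + 1) + 1 + 1 := by ring
    rw [h, pow_succ, pow_succ, ih, smul_mul_assoc, smul_mul_assoc, mul_assoc, ← mul_assoc A A A,
      h3, pow_succ]
    simp [neg_mul, mul_neg]

lemma pow_even_of_cube (A : Matrix (Fin 3) (Fin 3) ℝ) (h3 : A * A * A = -A) (k : ℕ) :
    A ^ (2 * k + 2) = ((-1 : ℝ) ^ k) • (A * A) := by
  have h : 2 * k + 2 = (2 * k + 1) + 1 := by ring
  rw [h, pow_succ, pow_odd_of_cube A h3, smul_mul_assoc]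

set_option maxHeartbeats 1000000 in
lemma rodrigues (A : Matrix (Fin 3) (Fin 3) ℝ) (h3 : A * A * A = -A) (θ : ℝ) :
    NormedSpace.exp (θ • A) = 1 + Real.sin θ • A + (1 - Real.cos θ) • (A * A) := by
  rw [NormedSpace.exp_eq_tsum (𝕂 := ℝ)]
  refine HasSum.tsum_eq ?_
  have hodd : HasSum (fun k : ℕ => (((2 * k + 1)! : ℝ)⁻¹ : ℝ) • (θ • A) ^ (2 * k + 1))
      (Real.sin θ • A) := by
    have h := (Real.hasSum_sin θ).smul_const A
    convert h using 2 with k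
    rw [smul_pow, pow_odd_of_cube A h3, smul_smul, smul_smul]
    congr 1
    rw [div_eq_mul_inv]
    ring
  have heven : HasSum (fun k : ℕ => (((2 * k)! : ℝ)⁻¹ : ℝ) • (θ • A) ^ (2 * k))
      (1 + (1 - Real.cos θ) • (A * A)) := by
    have hc : HasSum (fun n : ℕ => (-1 : ℝ) ^ n * θ ^ (2 * n) / ↑(2 * n)!)
        ((Real.cos θ - 1) + ∑ i ∈ Finset.range 1, (-1 : ℝ) ^ i * θ ^ (2 * i) / ↑(2 * i)!) := by
      convert Real.hasSum_cos θ using 1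
      norm_num
    have hc1 := (hasSum_nat_add_iff 1).2 hc
    have hc2 := (hc1.neg.smul_const (A * A))
    have hc3 : HasSum (fun k : ℕ => (((2 * (k + 1))! : ℝ)⁻¹ : ℝ) • (θ • A) ^ (2 * (k + 1)))
        ((1 - Real.cos θ) • (A * A)) := by
      rw [show (1 : ℝ) - Real.cos θ = -(Real.cos θ - 1) from by ring]
      convert hc2 using 2 with k
      have h2 : 2 * (k + 1) = 2 * k + 2 := by ring
      rw [h2, smul_pow, pow_even_of_cube A h3, smul_smul, smul_smul]
      congr 1
      rw [div_eq_mul_inv]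
      ring
    have := (hasSum_nat_add_iff (f := fun k : ℕ => (((2 * k)! : ℝ)⁻¹ : ℝ) • (θ • A) ^ (2 * k)) 1).1 hc3
    convert this using 1
    · rfl
    · norm_num
      abel
  have hgoal : (1 : Matrix (Fin 3) (Fin 3) ℝ) + Real.sin θ • A + (1 - Real.cos θ) • (A * A)
      = (1 + (1 - Real.cos θ) • (A * A)) + Real.sin θ • A := by abel
  rw [hgoal]
  exact heven.even_add_odd hodd

lemma hat_smul (t : ℝ) (w : Fin 3 → ℝ) : hat (t • w) = t • hat w := by
  ext i j
  fin_cases i <;> fin_cases j <;> simp [hat] <;> ring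

lemma hat_mulVec (w v : Fin 3 → ℝ) : (hat w).mulVec v = crossProduct w v := by
  funext i
  fin_cases i <;>
    simp [hat, crossProduct, Matrix.mulVec, dotProduct, Fin.sum_univ_three] <;> ring

lemma hat_cube (w : Fin 3 → ℝ) (h : w 0 ^ 2 + w 1 ^ 2 + w 2 ^ 2 = 1) :
    hat w * hat w * hat w = -(hat w) := by
  ext i j
  fin_cases i <;> fin_cases j <;>
    simp [hat, Matrix.mul_apply, Fin.sum_univ_three] <;>
    first
      | ring1
      | linear_combination (w 2) * h
      | linear_combination (-(w 2)) * h
      | linear_combination (w 1) * h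
      | linear_combination (-(w 1)) * h
      | linear_combination (w 0) * h
      | linear_combination (-(w 0)) * h

lemma BBt_fix (x y z : ℝ) (h : x ^ 2 + y ^ 2 + z ^ 2 = 1) (hz : 1 + z ≠ 0) (v : Fin 3 → ℝ)
    (hperp : x * v 0 + y * v 1 + z * v 2 = 0) :
    (Bmat x y z).mulVec ((Bmat x y z)ᵀ.mulVec v) = v := by
  funext i
  fin_cases i <;>
    simp [Bmat, Matrix.mulVec, dotProduct, Fin.sum_univ_two, Fin.sum_univ_three,
      Matrix.transpose_apply] <;>
    field_simp <;>
    first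
      | linear_combination (x * (x * v 0 + y * v 1 + (1+z) * v 2)) * h
          - (x * (1+z)^2) * hperp
      | linear_combination (y * (x * v 0 + y * v 1 + (1+z) * v 2)) * h
          - (y * (1+z)^2) * hperp
      | linear_combination ((x * v 0 + y * v 1 + (1+z) * v 2)) * h
          - (z * (1+z)) * hperp

set_option maxHeartbeats 2000000 in
theorem gravity_error_update (gk gk1 : Fin 3 → ℝ)
    (hk : ∑ i, gk i ^ 2 = 1) (hk1 : ∑ i, gk1 i ^ 2 = 1)
    (hdot : gk ⬝ᵥ gk1 > -1) (hne : gk ≠ gk1) (hz : gk 2 ≠ -1) :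
    (NormedSpace.exp (hat ((Bmat (gk 0) (gk 1) (gk 2)).mulVec
        ((Real.arccos (gk ⬝ᵥ gk1) / Real.sqrt (∑ i, (crossProduct gk gk1) i ^ 2)) •
          ((Bmat (gk 0) (gk 1) (gk 2))ᵀ.mulVec (crossProduct gk gk1)))))).mulVec gk
      = gk1 := by
  set c : Fin 3 → ℝ := crossProduct gk gk1 with hcdef
  set s : ℝ := Real.sqrt (∑ i, c i ^ 2) with hsdef
  set d : ℝ := gk ⬝ᵥ gk1 with hddef
  set θ : ℝ := Real.arccos d with hθdef
  have hkx : gk 0 ^ 2 + gk 1 ^ 2 + gk 2 ^ 2 = 1 := by simpa [Fin.sum_univ_three] using hk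
  have hk1x : gk1 0 ^ 2 + gk1 1 ^ 2 + gk1 2 ^ 2 = 1 := by simpa [Fin.sum_univ_three] using hk1
  have hdx : d = gk 0 * gk1 0 + gk 1 * gk1 1 + gk 2 * gk1 2 := by
    simp [hddef, dotProduct, Fin.sum_univ_three]
  have hd1 : d < 1 := by
    have hstrict : gk 0 ≠ gk1 0 ∨ gk 1 ≠ gk1 1 ∨ gk 2 ≠ gk1 2 := by
      by_contra hcon
      push_neg at hcon
      exact hne (by funext i; fin_cases i <;> simp [hcon.1, hcon.2.1, hcon.2.2])
    rcases hstrict with h | h | h <;>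
      · have h2 := mul_self_pos.mpr (sub_ne_zero.mpr h)
        nlinarith [sq_nonneg (gk 0 - gk1 0), sq_nonneg (gk 1 - gk1 1), sq_nonneg (gk 2 - gk1 2)]
  have hcos : Real.cos θ = d := Real.cos_arccos hdot.le hd1.le
  have hsin : Real.sin θ = Real.sqrt (1 - d ^ 2) := Real.sin_arccos d
  have hcs : ∑ i, c i ^ 2 = 1 - d ^ 2 := by
    rw [hdx]
    simp only [hcdef, cross_apply, Fin.sum_univ_three]
    simp only [Matrix.cons_val_zero, Matrix.cons_val_one, Matrix.head_cons,
      Matrix.cons_val_two, Matrix.tail_cons]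
    linear_combination (gk 0 ^ 2 + gk 1 ^ 2 + gk 2 ^ 2) * hk1x + hkx
  have hs : s = Real.sin θ := by rw [hsin, hsdef, hcs]
  have hd2pos : 0 < 1 - d ^ 2 := by nlinarith
  have hspos : 0 < s := by rw [hsdef, hcs]; exact Real.sqrt_pos.mpr hd2pos
  have hs2 : s ^ 2 = 1 - d ^ 2 := by
    rw [hsdef, hcs]; exact Real.sq_sqrt hd2pos.le
  have hgc : gk 0 * c 0 + gk 1 * c 1 + gk 2 * c 2 = 0 := by
    simp [hcdef, cross_apply]; ring
  have hz' : (1 : ℝ) + gk 2 ≠ 0 := fun h => hz (by linarith)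
  have hBv : (Bmat (gk 0) (gk 1) (gk 2)).mulVec
      ((θ / s) • ((Bmat (gk 0) (gk 1) (gk 2))ᵀ.mulVec c)) = (θ / s) • c := by
    rw [Matrix.mulVec_smul, BBt_fix _ _ _ hkx hz' c hgc]
  rw [hBv]
  have hsplit : (θ / s) • c = θ • (s⁻¹ • c) := by
    rw [smul_smul, div_eq_mul_inv]
  rw [hsplit, hat_smul]
  have hu : (s⁻¹ • c) 0 ^ 2 + (s⁻¹ • c) 1 ^ 2 + (s⁻¹ • c) 2 ^ 2 = 1 := by
    have hcs' : c 0 ^ 2 + c 1 ^ 2 + c 2 ^ 2 = s ^ 2 := by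
      rw [hs2, ← hcs]; simp [Fin.sum_univ_three]
    simp only [Pi.smul_apply, smul_eq_mul]
    field_simp
    linear_combination hcs'
  rw [rodrigues _ (hat_cube (s⁻¹ • c) hu) θ]
  rw [Matrix.add_mulVec, Matrix.add_mulVec, Matrix.one_mulVec, Matrix.smul_mulVec,
    Matrix.smul_mulVec, ← Matrix.mulVec_mulVec, hat_mulVec, hat_mulVec]
  rw [hcos, ← hs]
  funext i
  fin_cases i <;>
    simp only [Pi.add_apply, Pi.smul_apply, smul_eq_mul, cross_apply, hcdef,
      Matrix.cons_val_zero, Matrix.cons_val_one, Matrix.head_cons, Matrix.cons_val_two,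
      Matrix.tail_cons, Fin.zero_eta, Fin.mk_one] <;>
    (try simp only [show (⟨2, by omega⟩ : Fin 3) = 2 from rfl, Matrix.cons_val_two, Matrix.tail_cons,
      Matrix.head_cons]) <;>
    field_simp <;>
    first
      | linear_combination ((-1) * (gk 0) * (gk 1) * (gk1 1) + (-1) * (gk 0) * (gk 2) * (gk1 2) + (gk 0) + (gk 1)^2 * (gk1 0) + (gk 2)^2 * (gk1 0) + (-1) * (gk1 0)) * hs2 + (d * (gk 0) * (gk 1) * (gk1 1) + d * (gk 0) * (gk 2) * (gk1 2) + (-1) * d * (gk 0) + (-1) * d * (gk 1)^2 * (gk1 0) + (-1) * d * (gk 2)^2 * (gk1 0) + d * (gk1 0) + (gk 0)^3 * (gk1 1)^2 + (gk 0)^3 * (gk1 2)^2 + (-1) * (gk 0)^2 * (gk 1) * (gk1 0) * (gk1 1) + (-1) * (gk 0)^2 * (gk 2) * (gk1 0) * (gk1 2) + (-1) * (gk 0)^2 * (gk1 0) + (gk 0) * (gk 1)^2 * (gk1 1)^2 + (gk 0) * (gk 1)^2 * (gk1 2)^2 + (-1) * (gk 0) * (gk 1) * (gk1 1) + (gk 0)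 * (gk 2)^2 * (gk1 1)^2 + (gk 0) * (gk 2)^2 * (gk1 2)^2 + (-1) * (gk 0) * (gk 2) * (gk1 2) + (gk 0) * (gk1 0)^2 + (-1) * (gk 1)^3 * (gk1 0) * (gk1 1) + (-1) * (gk 1)^2 * (gk 2) * (gk1 0) * (gk1 2) + (-1) * (gk 1) * (gk 2)^2 * (gk1 0) * (gk1 1) + (gk 1) * (gk1 0) * (gk1 1) + (-1) * (gk 2)^3 * (gk1 0) * (gk1 2) + (gk 2) * (gk1 0) * (gk1 2)) * hdx + ((gk 0)^2 * (gk1 0) * (gk1 1)^2 + (gk 0)^2 * (gk1 0) * (gk1 2)^2 + (-1) * (gk 0) * (gk 1) * (gk1 0)^2 * (gk1 1) + (gk 0) * (gk 1) * (gk1 1)^3 + (gk 0) * (gk 1) * (gk1 1) * (gk1 2)^2 + (-1) * (gk 0) * (gk 2) * (gk1 0)^2 * (gk1 2) + (gk 0) * (gk 2) * (gk1 1)^2 * (gk1 2) + (gk 0) * (gk 2) * (gk1 2)^3 + (-1) * (gk 0) * (gk1 0)^2 + (-1) * (gk 0) * (gk1 1)^2 + (-1) * (gk 0) * (gk1 2)^2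 + (-1) * (gk 1)^2 * (gk1 0) * (gk1 1)^2 + (-2) * (gk 1) * (gk 2) * (gk1 0) * (gk1 1) * (gk1 2) + (-1) * (gk 2)^2 * (gk1 0) * (gk1 2)^2 + (gk1 0)^3 + (gk1 0) * (gk1 1)^2 + (gk1 0) * (gk1 2)^2) * hkx + ((gk 0) * (gk 1) * (gk1 1) + (gk 0) * (gk 2) * (gk1 2) + (-1) * (gk 0) + (-1) * (gk 1)^2 * (gk1 0) + (-1) * (gk 2)^2 * (gk1 0) + (gk1 0)) * hk1x
      | linear_combination ((gk 0)^2 * (gk1 1) + (-1) * (gk 0) * (gk 1) * (gk1 0) + (-1) * (gk 1) * (gk 2) * (gk1 2) + (gk 1) + (gk 2)^2 * (gk1 1) + (-1) * (gk1 1)) * hs2 + ((-1) * d * (gk 0)^2 * (gk1 1) + d * (gk 0) * (gk 1) * (gk1 0) + d * (gk 1) * (gk 2) * (gk1 2) + (-1) * d * (gk 1) + (-1) * d * (gk 2)^2 * (gk1 1) + d * (gk1 1) + (-1) * (gk 0)^3 * (gk1 0) * (gk1 1) + (gk 0)^2 * (gk 1) * (gk1 0)^2 + (gk 0)^2 * (gk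 1) * (gk1 2)^2 + (-1) * (gk 0)^2 * (gk 2) * (gk1 1) * (gk1 2) + (-1) * (gk 0) * (gk 1)^2 * (gk1 0) * (gk1 1) + (-1) * (gk 0) * (gk 1) * (gk1 0) + (-1) * (gk 0) * (gk 2)^2 * (gk1 0) * (gk1 1) + (gk 0) * (gk1 0) * (gk1 1) + (gk 1)^3 * (gk1 0)^2 + (gk 1)^3 * (gk1 2)^2 + (-1) * (gk 1)^2 * (gk 2) * (gk1 1) * (gk1 2) + (-1) * (gk 1)^2 * (gk1 1) + (gk 1) * (gk 2)^2 * (gk1 0)^2 + (gk 1) * (gk 2)^2 * (gk1 2)^2 + (-1) * (gk 1) * (gk 2) * (gk1 2) + (gk 1) * (gk1 1)^2 + (-1) * (gk 2)^3 * (gk1 1) * (gk1 2) + (gk 2) * (gk1 1) * (gk1 2)) * hdx + ((-1) * (gk 0)^2 * (gk1 0)^2 * (gk1 1) + (gk 0) * (gk 1) * (gk1 0)^3 + (-1) * (gk 0) * (gk 1) * (gk1 0) * (gk1 1)^2 + (gk 0) * (gk 1) * (gk1 0) * (gk1 2)^2 + (-2) * (gk 0) * (gk 2) * (gk1 0) *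 (gk1 1) * (gk1 2) + (gk 1)^2 * (gk1 0)^2 * (gk1 1) + (gk 1)^2 * (gk1 1) * (gk1 2)^2 + (gk 1) * (gk 2) * (gk1 0)^2 * (gk1 2) + (-1) * (gk 1) * (gk 2) * (gk1 1)^2 * (gk1 2) + (gk 1) * (gk 2) * (gk1 2)^3 + (-1) * (gk 1) * (gk1 0)^2 + (-1) * (gk 1) * (gk1 1)^2 + (-1) * (gk 1) * (gk1 2)^2 + (-1) * (gk 2)^2 * (gk1 1) * (gk1 2)^2 + (gk1 1)) * hkx + ((gk 0) * (gk 1) * (gk1 0) + (gk 1)^2 * (gk1 1) + (gk 1) * (gk 2) * (gk1 2) + (-1) * (gk 1)) * hk1x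
      | linear_combination ((gk 0)^2 * (gk1 2) + (-1) * (gk 0) * (gk 2) * (gk1 0) + (gk 1)^2 * (gk1 2) + (-1) * (gk 1) * (gk 2) * (gk1 1) + (gk 2) + (-1) * (gk1 2)) * hs2 + ((-1) * d * (gk 0)^2 * (gk1 2) + d * (gk 0) * (gk 2) * (gk1 0) + (-1) * d * (gk 1)^2 * (gk1 2) + d * (gk 1) * (gk 2) * (gk1 1) + (-1) * d * (gk 2) + d * (gk1 2) + (-1) * (gk 0)^3 * (gk1 0) * (gk1 2) + (-1) * (gk 0)^2 * (gk 1) * (gk1 1) * (gk1 2) + (gk 0)^2 * (gk 2) * (gk1 0)^2 + (gk 0)^2 * (gk 2) * (gk1 1)^2 + (-1) * (gk 0) * (gk 1)^2 * (gk1 0) * (gk1 2) + (-1) * (gk 0) * (gk 2)^2 * (gk1 0) * (gk1 2) + (-1) * (gk 0) * (gk 2) * (gk1 0) + (gk 0) * (gk1 0) * (gk1 2) + (-1) * (gk 1)^3 * (gk1 1) * (gk1 2) + (gk 1)^2 * (gk 2) * (gk1 0)^2 + (gk 1)^2 * (gk 2) * (gk1 1)^2 + (-1) * (gk 1) * (gk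 2)^2 * (gk1 1) * (gk1 2) + (-1) * (gk 1) * (gk 2) * (gk1 1) + (gk 1) * (gk1 1) * (gk1 2) + (gk 2)^3 * (gk1 0)^2 + (gk 2)^3 * (gk1 1)^2 + (-1) * (gk 2)^2 * (gk1 2) + (gk 2) * (gk1 2)^2) * hdx + ((-1) * (gk 0)^2 * (gk1 0)^2 * (gk1 2) + (-2) * (gk 0) * (gk 1) * (gk1 0) * (gk1 1) * (gk1 2) + (gk 0) * (gk 2) * (gk1 0)^3 + (gk 0) * (gk 2) * (gk1 0) * (gk1 1)^2 + (-1) * (gk 0) * (gk 2) * (gk1 0) * (gk1 2)^2 + (-1) * (gk 1)^2 * (gk1 1)^2 * (gk1 2) + (gk 1) * (gk 2) * (gk1 0)^2 * (gk1 1) + (gk 1) * (gk 2) * (gk1 1)^3 + (-1) * (gk 1) * (gk 2) * (gk1 1) * (gk1 2)^2 + (gk 2)^2 * (gk1 0)^2 * (gk1 2) + (gk 2)^2 * (gk1 1)^2 * (gk1 2) + (-1) * (gk 2) * (gk1 0)^2 + (-1) * (gk 2) * (gk1 1)^2 + (-1) * (gk 2) * (gk1 2)^2 + (gk1 2)) *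 hkx + ((gk 0) * (gk 2) * (gk1 0) + (gk 1) * (gk 2) * (gk1 1) + (gk 2)^2 * (gk1 2) + (-1) * (gk 2)) * hk1x
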